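/- arXiv:2310.04861 — 4 statements merged into one kernel-verified Lean document; each statement's English description precedes it below -/
import Mathlib

section
/- Let A ∈ ℝ^{N×N} be symmetric with A·1_N = 0, where 1_N is the all-ones vector. Define the finite difference matrix ΔA by (ΔA)_{t,t'} = N²·(A_{t,t'} - A_{t-1,t'} - A_{t,t'-1} + A_{t-1,t'-1}) with periodic index extension. Then (ΔA)·1_N = 0 and, with F the N×N DFT matrix and Γ = diag(γ_1,…,γ_N) where γ_1 = 1 and γ_t = N^{-1}(1 - exp(-2πi(t-1)/N))^{-1} for t > 1, one has F A Fᵀ = Γ F (ΔA) Fᵀ Γ. -/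
open Complex Matrix Finset

lemma shift_sum' {N : ℕ} [NeZero N] {M : Type*} [AddCommMonoid M] (g : Fin N → M) :
    ∑ t, g (t - 1) = ∑ t, g t :=
  Fintype.sum_equiv (Equiv.subRight 1) _ _ (fun _ => rfl)

theorem dft_diff_matrix (N : ℕ) [NeZero N]
    (A : Matrix (Fin N) (Fin N) ℝ) (hsymm : A.IsSymm)
    (hsum : A.mulVec (fun _ => 1) = 0)
    (ΔA : Matrix (Fin N) (Fin N) ℝ)
    (hΔA : ∀ t t', ΔA t t' =
      (N : ℝ) ^ 2 * (A t t' - A (t - 1) t' - A t (t' - 1) + A (t - 1) (t' - 1)))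
    (F : Matrix (Fin N) (Fin N) ℂ)
    (hF : ∀ t t', F t t' =
      Complex.exp (-2 * Real.pi * Complex.I * ((t : ℕ) : ℂ) * ((t' : ℕ) : ℂ) / N))
    (γ : Fin N → ℂ) (hγ0 : γ 0 = 1)
    (hγ : ∀ t : Fin N, t ≠ 0 →
      γ t = (N : ℂ)⁻¹ * (1 - Complex.exp (-2 * Real.pi * Complex.I * ((t : ℕ) : ℂ) / N))⁻¹) :
    ΔA.mulVec (fun _ => 1) = 0 ∧
    F * A.map (fun a => (a : ℂ)) * F.transpose =
      Matrix.diagonal γ * F * ΔA.map (fun a => (a : ℂ)) * F.transpose * Matrix.diagonal γ := by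
  have rowsum : ∀ i, ∑ j, A i j = 0 := by
    intro i
    have := congrFun hsum i
    simpa [Matrix.mulVec, dotProduct] using this
  have colsum : ∀ j, ∑ i, A i j = 0 := by
    intro j
    calc ∑ i, A i j = ∑ i, A j i :=
          Finset.sum_congr rfl fun i _ => hsymm.apply j i
      _ = 0 := rowsum j
  constructor
  · funext t
    have e1 : ∑ j, A t (j - 1) = ∑ j, A t j := shift_sum' _
    have e2 : ∑ j, A (t - 1) (j - 1) = ∑ j, A (t - 1) j := shift_sum' _
    simp only [Matrix.mulVec, dotProduct, mul_one, Pi.zero_apply]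
    calc ∑ j, ΔA t j
        = ∑ j, (N:ℝ)^2 * (A t j - A (t - 1) j - A t (j - 1) + A (t - 1) (j - 1)) :=
          Finset.sum_congr rfl fun j _ => hΔA t j
      _ = (N:ℝ)^2 * ((∑ j, A t j) - (∑ j, A (t-1) j) - (∑ j, A t (j-1))
            + (∑ j, A (t-1) (j-1))) := by
          rw [← Finset.mul_sum]
          congr 1
          rw [Finset.sum_add_distrib, Finset.sum_sub_distrib, Finset.sum_sub_distrib]
      _ = 0 := by rw [e1, e2, rowsum, rowsum]; ring
  · have hN : (N:ℂ) ≠ 0 := Nat.cast_ne_zero.2 (NeZero.ne N)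
    set w : Fin N → ℂ :=
      fun s => Complex.exp (-2 * Real.pi * Complex.I * ((s:ℕ):ℂ) / N) with hw
    have hγ' : ∀ t : Fin N, t ≠ 0 → γ t = (N:ℂ)⁻¹ * (1 - w t)⁻¹ := hγ
    have hFw : ∀ s t : Fin N, F s t = w s ^ (t:ℕ) := by
      intro s t
      rw [hF, hw, ← Complex.exp_nat_mul]
      congr 1
      ring
    have hwN : ∀ s : Fin N, w s ^ N = 1 := by
      intro s
      rw [hw]
      simp only
      rw [← Complex.exp_nat_mul]
      have : (N:ℂ) * (-2 * Real.pi * Complex.I * ((s:ℕ):ℂ) / N)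
          = ((-(s:ℕ) : ℤ) : ℂ) * (2 * Real.pi * Complex.I) := by
        push_cast
        field_simp
      rw [this, Complex.exp_int_mul_two_pi_mul_I]
    have hwpow : ∀ (s : Fin N) (a : ℕ), w s ^ (a % N) = w s ^ a := by
      intro s a
      conv_rhs => rw [← Nat.div_add_mod a N]
      rw [pow_add, pow_mul, hwN, one_pow, one_mul]
    have hFshift : ∀ s t : Fin N, F s (t + 1) = w s * F s t := by
      intro s t
      rw [hFw, hFw]
      have hv : ((t + 1 : Fin N) : ℕ) = ((t:ℕ) + 1) % N := by
        rw [Fin.add_def, Fin.val_one']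
        exact Nat.ModEq.add_left _ (Nat.mod_modEq 1 N)
      rw [hv, hwpow, pow_succ]
      ring
    have key : ∀ (s : Fin N) (g : Fin N → ℂ),
        ∑ t, F s t * g (t - 1) = w s * ∑ t, F s t * g t := by
      intro s g
      have h1 : ∑ t, F s ((t - 1) + 1) * g (t - 1) = ∑ t, F s (t + 1) * g t :=
        shift_sum' (fun t => F s (t + 1) * g t)
      simp only [sub_add_cancel] at h1
      rw [h1]
      simp only [hFshift, Finset.mul_sum, mul_assoc]
    have hwne : ∀ s : Fin N, s ≠ 0 → 1 - w s ≠ 0 := by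
      intro s hs h
      have hws : w s = 1 := by linear_combination -h
      rw [hw] at hws
      simp only at hws
      rw [Complex.exp_eq_one_iff] at hws
      obtain ⟨n, hn⟩ := hws
      have hπ : (Real.pi:ℂ) ≠ 0 := by exact_mod_cast Real.pi_ne_zero
      have h2πI : (2 * (Real.pi:ℂ) * Complex.I) ≠ 0 := by
        simp [hπ, Complex.I_ne_zero]
      have hcast : 2 * (Real.pi:ℂ) * Complex.I * ((s:ℕ):ℂ)
          = 2 * (Real.pi:ℂ) * Complex.I * (((-n * N : ℤ):ℂ)) := by
        field_simp at hn
        push_cast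
        linear_combination -(2 * (Real.pi:ℂ) * Complex.I) * hn
      have hc2 : ((s:ℕ):ℂ) = ((-n * N : ℤ):ℂ) := mul_left_cancel₀ h2πI hcast
      have hz : ((s:ℕ):ℤ) = -n * N := by exact_mod_cast hc2
      have hdvd : (N:ℤ) ∣ ((s:ℕ):ℤ) := ⟨-n, by linarith [hz]⟩
      have hdvd' : N ∣ (s:ℕ) := by exact_mod_cast hdvd
      have hpos : 0 < (s:ℕ) := Nat.pos_of_ne_zero (fun h => hs (Fin.ext (by simp [h])))
      exact absurd (Nat.le_of_dvd hpos hdvd') (not_le.2 s.isLt)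
    ext s s'
    have hLHS : (F * A.map (fun a => (a:ℂ)) * F.transpose) s s'
        = ∑ j, (∑ i, F s i * ((A i j : ℝ):ℂ)) * F s' j := by
      simp only [Matrix.mul_apply, Matrix.transpose_apply, Matrix.map_apply]
    have hRHS : (Matrix.diagonal γ * F * ΔA.map (fun a => (a:ℂ)) * F.transpose
          * Matrix.diagonal γ) s s'
        = γ s * (∑ j, (∑ i, F s i * ((ΔA i j : ℝ):ℂ)) * F s' j) * γ s' := by
      have hassoc : Matrix.diagonal γ * F * ΔA.map (fun a => (a:ℂ)) * F.transpose
          * Matrix.diagonal γ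
          = Matrix.diagonal γ * (F * ΔA.map (fun a => (a:ℂ)) * F.transpose)
            * Matrix.diagonal γ := by
        simp only [Matrix.mul_assoc]
      rw [hassoc, Matrix.mul_diagonal, Matrix.diagonal_mul]
      simp only [Matrix.mul_apply, Matrix.map_apply, Matrix.transpose_apply]
    set P : Fin N → ℂ := fun j => ∑ i, F s i * ((A i j : ℝ):ℂ) with hP
    set S : ℂ := ∑ j, P j * F s' j with hS
    set T : ℂ := ∑ j, (∑ i, F s i * ((ΔA i j : ℝ):ℂ)) * F s' j with hT0
    have hinner : ∀ j, (∑ i, F s i * ((ΔA i j : ℝ):ℂ))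
        = (N:ℂ)^2 * (1 - w s) * (P j - P (j - 1)) := by
      intro j
      set g : Fin N → ℂ := fun i => ((A i j : ℝ):ℂ) - ((A i (j-1) : ℝ):ℂ) with hg
      have hkey := key s g
      calc ∑ i, F s i * ((ΔA i j : ℝ):ℂ)
          = ∑ i, (N:ℂ)^2 * (F s i * (g i - g (i - 1))) := by
            refine Finset.sum_congr rfl fun i _ => ?_
            rw [hΔA]
            simp only [hg]
            push_cast
            ring
        _ = (N:ℂ)^2 * ∑ i, (F s i * g i - F s i * g (i - 1)) := by
            rw [← Finset.mul_sum]
            congr 1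
            exact Finset.sum_congr rfl fun i _ => by ring
        _ = (N:ℂ)^2 * ((∑ i, F s i * g i) - ∑ i, F s i * g (i - 1)) := by
            rw [Finset.sum_sub_distrib]
        _ = (N:ℂ)^2 * (1 - w s) * ∑ i, F s i * g i := by
            rw [hkey]; ring
        _ = (N:ℂ)^2 * (1 - w s) * (P j - P (j - 1)) := by
            congr 1
            simp only [hg, hP, mul_sub]
            rw [Finset.sum_sub_distrib]
    have hTS : T = (N:ℂ)^2 * (1 - w s) * (1 - w s') * S := by
      have hkey' := key s' P
      calc T = ∑ j, ((N:ℂ)^2 * (1 - w s) * (P j - P (j - 1))) * F s' j := by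
            rw [hT0]
            exact Finset.sum_congr rfl fun j _ => by rw [hinner]
        _ = ∑ j, ((N:ℂ)^2 * (1 - w s)) * (F s' j * P j - F s' j * P (j - 1)) :=
            Finset.sum_congr rfl fun j _ => by ring
        _ = (N:ℂ)^2 * (1 - w s) * ∑ j, (F s' j * P j - F s' j * P (j - 1)) := by
            rw [← Finset.mul_sum]
        _ = (N:ℂ)^2 * (1 - w s) * ((∑ j, F s' j * P j) - ∑ j, F s' j * P (j - 1)) := by
            rw [Finset.sum_sub_distrib]
        _ = (N:ℂ)^2 * (1 - w s) * (1 - w s') * ∑ j, F s' j * P j := by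
            rw [hkey']; ring
        _ = (N:ℂ)^2 * (1 - w s) * (1 - w s') * S := by
            rw [hS]
            congr 1
            exact Finset.sum_congr rfl fun j _ => by ring
    rw [hLHS, hRHS]
    have hF0 : ∀ t : Fin N, F 0 t = 1 := by
      intro t
      rw [hFw]
      have : w (0 : Fin N) = 1 := by
        rw [hw]; simp
      rw [this, one_pow]
    by_cases hs : s = 0
    · subst hs
      have hS0 : S = 0 := by
        rw [hS]
        refine Finset.sum_eq_zero fun j _ => ?_
        have : P j = 0 := by
          rw [hP]
          simp only [hF0, one_mul]
          rw [← Complex.ofReal_sum, colsum]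
          simp
        rw [this, zero_mul]
      rw [hTS, hS0]
      ring
    · by_cases hs' : s' = 0
      · subst hs'
        have hS0 : S = 0 := by
          rw [hS]
          simp only [hF0, mul_one, hP]
          rw [Finset.sum_comm]
          refine Finset.sum_eq_zero fun i _ => ?_
          rw [← Finset.mul_sum, ← Complex.ofReal_sum, rowsum]
          simp
        rw [hTS, hS0]
        ring
      · rw [hTS, hγ' s hs, hγ' s' hs']
        have h1 := hwne s hs
        have h2 := hwne s' hs'
        field_simp
end

section
/- Let A ∈ ℝ^{N×N} be symmetric with A·1_N = 0, and let Δ^{(m,m)}A denote the m-fold iterated mixed second finite difference with periodic extension, scaled by N² at each application. With F the N×N DFT matrix and Γ = diag(γ_1,…,γ_N) the multiplier matrix, the 2D DFT satisfies F A Fᵀ = Γ^m F (Δ^{(m,m)} A) Fᵀ Γ^m for every positive integer m. -/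
open Complex Matrix

/-- The mixed second finite difference with periodic indexing, scaled by `N²`. -/
def mixedDiff (N : ℕ) [NeZero N] (A : Matrix (Fin N) (Fin N) ℝ) : Matrix (Fin N) (Fin N) ℝ :=
  Matrix.of fun t t' =>
    (N : ℝ) ^ 2 * (A t t' - A (t - 1) t' - A t (t' - 1) + A (t - 1) (t' - 1))

namespace DFTAux

variable (N : ℕ) [NeZero N]

/-- complex version of the mixed difference -/
def mDC (B : Matrix (Fin N) (Fin N) ℂ) : Matrix (Fin N) (Fin N) ℂ :=
  Matrix.of fun t t' =>
    (N : ℂ) ^ 2 * (B t t' - B (t - 1) t' - B t (t' - 1) + B (t - 1) (t' - 1))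

noncomputable def eK (k : Fin N) : ℂ :=
  Complex.exp (-2 * Real.pi * Complex.I * ((k : ℕ) : ℂ) / N)

lemma hN0 : (N : ℂ) ≠ 0 := Nat.cast_ne_zero.mpr (NeZero.ne N)

lemma map_iterate (A : Matrix (Fin N) (Fin N) ℝ) (q : ℕ) :
    ((mixedDiff N)^[q] A).map (fun a => (a : ℂ)) =
      (mDC N)^[q] (A.map (fun a => (a : ℂ))) := by
  induction q with
  | zero => rfl
  | succ q ih =>
    rw [Function.iterate_succ_apply', Function.iterate_succ_apply', ← ih]
    ext t t'
    simp only [mixedDiff, mDC, Matrix.map_apply, Matrix.of_apply]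
    push_cast
    ring

lemma exp_mod (k : Fin N) (a : ℕ) :
    Complex.exp (-2 * Real.pi * Complex.I * (((a % N : ℕ)) : ℂ) * ((k : ℕ) : ℂ) / N) =
      Complex.exp (-2 * Real.pi * Complex.I * (a : ℂ) * ((k : ℕ) : ℂ) / N) := by
  have hN : (N : ℂ) ≠ 0 := hN0 N
  obtain ⟨d, hd⟩ : ∃ d, a = N * d + a % N := ⟨a / N, (Nat.div_add_mod a N).symm⟩
  set n : ℤ := -((k : ℕ) * d : ℕ) with hn
  have key : (-2 * Real.pi * Complex.I * (a : ℂ) * ((k : ℕ) : ℂ) / N) =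
      (-2 * Real.pi * Complex.I * (((a % N : ℕ)) : ℂ) * ((k : ℕ) : ℂ) / N)
        + (n : ℂ) * (2 * Real.pi * Complex.I) := by
    have ha : (a : ℂ) = (N : ℂ) * (d : ℂ) + ((a % N : ℕ) : ℂ) := by
      exact_mod_cast congrArg (Nat.cast : ℕ → ℂ) hd
    rw [ha, hn]
    push_cast
    field_simp
    ring
  rw [key, Complex.exp_add, Complex.exp_int_mul_two_pi_mul_I n, mul_one]

lemma Fshift (F : Matrix (Fin N) (Fin N) ℂ)
    (hF : ∀ t t', F t t' =
      Complex.exp (-2 * Real.pi * Complex.I * ((t : ℕ) : ℂ) * ((t' : ℕ) : ℂ) / N))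
    (k t : Fin N) : F k (t + 1) = eK N k * F k t := by
  have hN : (N : ℂ) ≠ 0 := hN0 N
  rw [hF, hF, eK]
  have hval : ((t + 1 : Fin N) : ℕ) = ((t : ℕ) + 1) % N := by
    rw [Fin.val_add, Fin.val_one' N, Nat.add_mod ((t : ℕ)) 1 N,
      Nat.mod_eq_of_lt t.isLt]
  have hcomm : ∀ a : ℕ,
      Complex.exp (-2 * Real.pi * Complex.I * ((k : ℕ) : ℂ) * ((a : ℕ) : ℂ) / N) =
      Complex.exp (-2 * Real.pi * Complex.I * ((a : ℕ) : ℂ) * ((k : ℕ) : ℂ) / N) := by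
    intro a; ring_nf
  rw [hval, hcomm, exp_mod, ← Complex.exp_add]
  congr 1
  push_cast
  field_simp
  ring

lemma tri (F B : Matrix (Fin N) (Fin N) ℂ) (k l : Fin N) :
    (F * B * F.transpose) k l = ∑ t : Fin N, ∑ t' : Fin N, F k t * B t t' * F l t' := by
  rw [Matrix.mul_apply]
  simp_rw [Matrix.mul_apply, Matrix.transpose_apply, Finset.sum_mul]
  exact Finset.sum_comm

lemma key (F : Matrix (Fin N) (Fin N) ℂ)
    (hF : ∀ t t', F t t' =
      Complex.exp (-2 * Real.pi * Complex.I * ((t : ℕ) : ℂ) * ((t' : ℕ) : ℂ) / N))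
    (B : Matrix (Fin N) (Fin N) ℂ) (k l : Fin N) :
    (F * mDC N B * F.transpose) k l =
      ((N : ℂ) * (1 - eK N k)) * ((N : ℂ) * (1 - eK N l)) * ((F * B * F.transpose) k l) := by
  have hshk : ∀ t, F k (t + 1) = eK N k * F k t := fun t => Fshift N F hF k t
  have hshl : ∀ t, F l (t + 1) = eK N l * F l t := fun t => Fshift N F hF l t
  rw [tri, tri]
  set S : ℂ := ∑ t : Fin N, ∑ t' : Fin N, F k t * B t t' * F l t' with hS
  have h10 : (∑ t : Fin N, ∑ t' : Fin N, F k t * B (t - 1) t' * F l t') = eK N k * S := by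
    rw [hS, Finset.mul_sum]
    refine Fintype.sum_equiv (Equiv.subRight (1 : Fin N)) _ _ fun t => ?_
    simp only [Equiv.subRight_apply]
    rw [Finset.mul_sum]
    refine Finset.sum_congr rfl fun t' _ => ?_
    have h := hshk (t - 1)
    rw [sub_add_cancel] at h
    rw [h]; ring
  have h01 : (∑ t : Fin N, ∑ t' : Fin N, F k t * B t (t' - 1) * F l t') = eK N l * S := by
    rw [hS, Finset.mul_sum]
    refine Finset.sum_congr rfl fun t _ => ?_
    rw [Finset.mul_sum]
    refine Fintype.sum_equiv (Equiv.subRight (1 : Fin N)) _ _ fun t' => ?_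
    simp only [Equiv.subRight_apply]
    have h := hshl (t' - 1)
    rw [sub_add_cancel] at h
    rw [h]; ring
  have h11 : (∑ t : Fin N, ∑ t' : Fin N, F k t * B (t - 1) (t' - 1) * F l t')
      = eK N k * eK N l * S := by
    rw [hS, Finset.mul_sum]
    refine Fintype.sum_equiv (Equiv.subRight (1 : Fin N)) _ _ fun t => ?_
    simp only [Equiv.subRight_apply]
    rw [Finset.mul_sum]
    refine Fintype.sum_equiv (Equiv.subRight (1 : Fin N)) _ _ fun t' => ?_
    simp only [Equiv.subRight_apply]
    have hk' := hshk (t - 1)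
    rw [sub_add_cancel] at hk'
    have hl' := hshl (t' - 1)
    rw [sub_add_cancel] at hl'
    rw [hk', hl']; ring
  have hptw : ∀ t t' : Fin N, F k t * (mDC N B t t') * F l t'
      = (N : ℂ) ^ 2 * (F k t * B t t' * F l t')
        - (N : ℂ) ^ 2 * (F k t * B (t - 1) t' * F l t')
        - (N : ℂ) ^ 2 * (F k t * B t (t' - 1) * F l t')
        + (N : ℂ) ^ 2 * (F k t * B (t - 1) (t' - 1) * F l t') := by
    intro t t'
    simp only [mDC, Matrix.of_apply]
    ring
  simp_rw [hptw, Finset.sum_add_distrib, Finset.sum_sub_distrib, ← Finset.mul_sum]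
  rw [h10, h01, h11]
  ring

end DFTAux

open DFTAux

theorem dft_iterated_diff (N : ℕ) [NeZero N]
    (A : Matrix (Fin N) (Fin N) ℝ) (hsymm : A.IsSymm)
    (hsum : A.mulVec (fun _ => 1) = 0)
    (F : Matrix (Fin N) (Fin N) ℂ)
    (hF : ∀ t t', F t t' =
      Complex.exp (-2 * Real.pi * Complex.I * ((t : ℕ) : ℂ) * ((t' : ℕ) : ℂ) / N))
    (γ : Fin N → ℂ) (hγ0 : γ 0 = 1)
    (hγ : ∀ t : Fin N, t ≠ 0 →
      γ t = (N : ℂ)⁻¹ * (1 - Complex.exp (-2 * Real.pi * Complex.I * ((t : ℕ) : ℂ) / N))⁻¹)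
    (m : ℕ) (hm : 0 < m) :
    F * A.map (fun a => (a : ℂ)) * F.transpose =
      (Matrix.diagonal γ) ^ m * F * ((mixedDiff N)^[m] A).map (fun a => (a : ℂ)) *
        F.transpose * (Matrix.diagonal γ) ^ m := by
  have hN : (N : ℂ) ≠ 0 := hN0 N
  -- row 0 of F is all ones
  have hFrow0 : ∀ t : Fin N, F 0 t = 1 := by
    intro t
    rw [hF]
    simp [Fin.val_zero N]
  -- row sums of A vanish
  have hrow : ∀ t : Fin N, (∑ t' : Fin N, ((A t t' : ℝ) : ℂ)) = 0 := by
    intro t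
    have h1 := congrFun hsum t
    simp only [Matrix.mulVec, dotProduct, mul_one, Pi.zero_apply] at h1
    exact_mod_cast h1
  -- column sums of A vanish (by symmetry)
  have hcol : ∀ t' : Fin N, (∑ t : Fin N, ((A t t' : ℝ) : ℂ)) = 0 := by
    intro t'
    have : (∑ t : Fin N, ((A t t' : ℝ) : ℂ)) = ∑ t : Fin N, ((A t' t : ℝ) : ℂ) := by
      refine Finset.sum_congr rfl fun t _ => ?_
      rw [← hsymm.apply t t']
    rw [this]
    exact hrow t'
  set Amap := A.map (fun a => (a : ℂ)) with hAmap
  -- zero row / zero column of the transform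
  have hG0 : ∀ l : Fin N, (F * Amap * F.transpose) 0 l = 0 := by
    intro l
    rw [tri]
    have hpt : ∀ t t' : Fin N, F 0 t * Amap t t' * F l t' = ((A t t' : ℝ) : ℂ) * F l t' := by
      intro t t'
      rw [hFrow0, one_mul, hAmap, Matrix.map_apply]
    simp_rw [hpt]
    rw [Finset.sum_comm]
    refine Finset.sum_eq_zero fun t' _ => ?_
    rw [← Finset.sum_mul, hcol t', zero_mul]
  have hG0' : ∀ k : Fin N, (F * Amap * F.transpose) k 0 = 0 := by
    intro k
    rw [tri]
    have hpt : ∀ t t' : Fin N, F k t * Amap t t' * F 0 t' = F k t * ((A t t' : ℝ) : ℂ) := by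
      intro t t'
      rw [hFrow0, mul_one, hAmap, Matrix.map_apply]
    simp_rw [hpt]
    refine Finset.sum_eq_zero fun t _ => ?_
    rw [← Finset.mul_sum, hrow t, mul_zero]
  -- γ k is the inverse of N (1 - eK k) for k ≠ 0
  have hγc : ∀ k : Fin N, k ≠ 0 → γ k * ((N : ℂ) * (1 - eK N k)) = 1 := by
    intro k hk
    have hπ : ((Real.pi : ℝ) : ℂ) ≠ 0 := by exact_mod_cast Real.pi_ne_zero
    have h2πI : (2 * (Real.pi : ℂ) * Complex.I : ℂ) ≠ 0 :=
      mul_ne_zero (mul_ne_zero two_ne_zero hπ) Complex.I_ne_zero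
    have hne : (1 : ℂ) - eK N k ≠ 0 := by
      rw [sub_ne_zero]
      intro h
      have h' : Complex.exp (-2 * Real.pi * Complex.I * ((k : ℕ) : ℂ) / N) = 1 := by
        have h2 := h.symm
        rw [eK] at h2
        exact h2
      rw [Complex.exp_eq_one_iff] at h'
      obtain ⟨n, hn⟩ := h'
      have h2 : (-((k : ℕ) : ℂ) / N) * (2 * Real.pi * Complex.I)
          = (n : ℂ) * (2 * Real.pi * Complex.I) := by
        rw [← hn]; ring
      have h3 : -((k : ℕ) : ℂ) / N = (n : ℂ) := mul_right_cancel₀ h2πI h2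
      have h4 : ((k : ℕ) : ℂ) = -(n : ℂ) * N := by
        field_simp at h3
        linear_combination -h3
      have h5 : ((k : ℕ) : ℤ) = -n * N := by exact_mod_cast h4
      have hdvd : (N : ℤ) ∣ ((k : ℕ) : ℤ) := ⟨-n, by rw [h5, mul_comm]⟩
      have hkpos : 0 < ((k : ℕ) : ℤ) := by
        have : (k : ℕ) ≠ 0 := fun h0 => hk (Fin.ext (by simp [h0]))
        omega
      have hle := Int.le_of_dvd hkpos hdvd
      have hlt : ((k : ℕ) : ℤ) < N := by exact_mod_cast k.isLt
      omega
    rw [hγ k hk]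
    rw [show Complex.exp (-2 * Real.pi * Complex.I * ((k : ℕ) : ℂ) / N) = eK N k from rfl]
    field_simp
  -- iterated key identity
  have hiter : ∀ (q : ℕ) (k l : Fin N),
      (F * ((mDC N)^[q] Amap) * F.transpose) k l
        = ((N : ℂ) * (1 - eK N k)) ^ q * ((N : ℂ) * (1 - eK N l)) ^ q
            * ((F * Amap * F.transpose) k l) := by
    intro q
    induction q with
    | zero => intro k l; simp
    | succ q ih =>
      intro k l
      rw [Function.iterate_succ_apply', key N F hF _ k l, ih k l]
      ring
  -- assemble
  ext k l
  simp only [Matrix.diagonal_pow]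
  rw [Matrix.mul_diagonal,
    show Matrix.diagonal (γ ^ m) * F * ((mixedDiff N)^[m] A).map (fun a => (a : ℂ))
        * F.transpose
      = Matrix.diagonal (γ ^ m)
        * (F * ((mixedDiff N)^[m] A).map (fun a => (a : ℂ)) * F.transpose) from by
      simp only [Matrix.mul_assoc],
    Matrix.diagonal_mul, Pi.pow_apply, Pi.pow_apply, map_iterate N A m, hiter m k l]
  by_cases hk : k = 0
  · subst hk
    rw [hG0 l]
    ring
  · by_cases hl : l = 0
    · subst hl
      rw [hG0' k]
      ring
    · have e1 : (γ k * ((N : ℂ) * (1 - eK N k))) ^ m = 1 := by rw [hγc k hk, one_pow]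
      have e2 : (γ l * ((N : ℂ) * (1 - eK N l))) ^ m = 1 := by rw [hγc l hl, one_pow]
      calc (F * Amap * F.transpose) k l
          = (γ k * ((N : ℂ) * (1 - eK N k))) ^ m * (γ l * ((N : ℂ) * (1 - eK N l))) ^ m
              * ((F * Amap * F.transpose) k l) := by rw [e1, e2]; ring
        _ = γ k ^ m * (((N : ℂ) * (1 - eK N k)) ^ m * ((N : ℂ) * (1 - eK N l)) ^ m
              * ((F * Amap * F.transpose) k l)) * γ l ^ m := by
            rw [mul_pow (γ k) ((N : ℂ) * (1 - eK N k)) m,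
              mul_pow (γ l) ((N : ℂ) * (1 - eK N l)) m]
            ring
end

section
/- Let A ∈ ℝ^{N×N} be symmetric with A·1_N = 0, let F be the N×N DFT matrix, Γ the multiplier diagonal matrix, and let = F A Fᵀ. Fix index sets I ⊆ {1,…,N} and J = {1,…,N}∖I. Then the off-block operator norm satisfies ‖Â_{I,J}‖_op ≤ max_{t∈I, t'∈J} |γ_t γ_{t'}|^m · ‖F (Δ^{(m,m)}A) Fᵀ‖_op for every positive integer m. -/
open Complex Matrix

noncomputable def auxc (N : ℕ) (t : Fin N) : ℂ :=
  Complex.exp (-2 * Real.pi * Complex.I * ((t : ℕ) : ℂ) / N)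

def auxS (N : ℕ) [NeZero N] : Matrix (Fin N) (Fin N) ℂ :=
  Matrix.of fun a b => if b = a - 1 then 1 else 0

lemma auxc_zero (N : ℕ) [NeZero N] : auxc N 0 = 1 := by
  simp [auxc]

lemma val_add_one' (N : ℕ) [NeZero N] (s : Fin N) : ((s + 1 : Fin N) : ℕ) = ((s : ℕ) + 1) % N := by
  rw [Fin.add_def, Fin.val_one']
  show ((s : ℕ) + 1 % N) % N = _
  conv_rhs => rw [Nat.add_mod, Nat.mod_eq_of_lt s.isLt]

lemma exp_shift (N : ℕ) [NeZero N] (t s : Fin N) :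
    Complex.exp (-2 * Real.pi * Complex.I * ((t : ℕ) : ℂ) * (((s + 1 : Fin N) : ℕ) : ℂ) / N)
    = auxc N t * Complex.exp (-2 * Real.pi * Complex.I * ((t : ℕ) : ℂ) * ((s : ℕ) : ℂ) / N) := by
  have hN : (N : ℂ) ≠ 0 := Nat.cast_ne_zero.mpr (NeZero.ne N)
  set k : ℕ := ((s : ℕ) + 1) / N with hk
  set n : ℤ := -((t : ℕ) * k : ℕ) with hn
  have hmod : ((s : ℕ) + 1) = N * k + ((s + 1 : Fin N) : ℕ) := by
    rw [val_add_one']; exact (Nat.div_add_mod _ _).symm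
  have hcast : ((s : ℕ) : ℂ) + 1 = (N : ℂ) * k + (((s + 1 : Fin N) : ℕ) : ℂ) := by
    exact_mod_cast congrArg (fun n : ℕ => (n : ℂ)) hmod
  have hs : ((s : ℕ) : ℂ) = (N : ℂ) * k + (((s + 1 : Fin N) : ℕ) : ℂ) - 1 :=
    eq_sub_of_add_eq hcast
  rw [auxc, ← Complex.exp_add]
  have hexp : -2 * Real.pi * Complex.I * ((t : ℕ) : ℂ) / N +
      -2 * Real.pi * Complex.I * ((t : ℕ) : ℂ) * ((s : ℕ) : ℂ) / N
      = -2 * Real.pi * Complex.I * ((t : ℕ) : ℂ) * (((s + 1 : Fin N) : ℕ) : ℂ) / N +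
        (n : ℂ) * (2 * Real.pi * Complex.I) := by
    rw [hs, hn]
    push_cast
    field_simp
    ring
  rw [hexp, Complex.exp_add, Complex.exp_int_mul_two_pi_mul_I, mul_one]

lemma auxS_mul (N : ℕ) [NeZero N] (M : Matrix (Fin N) (Fin N) ℂ) (i j : Fin N) :
    (auxS N * M) i j = M (i - 1) j := by
  simp [auxS, Matrix.mul_apply, ite_mul]

lemma mul_auxS_T (N : ℕ) [NeZero N] (M : Matrix (Fin N) (Fin N) ℂ) (i j : Fin N) :
    (M * (auxS N)ᵀ) i j = M i (j - 1) := by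
  simp [auxS, Matrix.mul_apply, mul_ite, Matrix.transpose_apply]

lemma F_mul_auxS (N : ℕ) [NeZero N] (F : Matrix (Fin N) (Fin N) ℂ)
    (hF : ∀ t t', F t t' =
      Complex.exp (-2 * Real.pi * Complex.I * ((t : ℕ) : ℂ) * ((t' : ℕ) : ℂ) / N)) :
    F * auxS N = Matrix.diagonal (auxc N) * F := by
  ext t s
  rw [Matrix.diagonal_mul]
  have h1 : (F * auxS N) t s = F t (s + 1) := by
    rw [Matrix.mul_apply]
    have : ∀ b : Fin N, F t b * auxS N b s = if b = s + 1 then F t b else 0 := by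
      intro b
      simp only [auxS, Matrix.of_apply, mul_ite, mul_one, mul_zero]
      congr 1
      simp only [eq_iff_iff]
      constructor
      · intro h; rw [h]; simp
      · intro h; rw [h]; simp
    simp only [this, Finset.sum_ite_eq' Finset.univ (s+1) (fun b => F t b), Finset.mem_univ, if_true]
  rw [h1, hF, hF, exp_shift]

lemma mixedDiff_map (N : ℕ) [NeZero N] (C : Matrix (Fin N) (Fin N) ℝ) :
    (mixedDiff N C).map (fun a => (a : ℂ)) =
      ((N : ℂ) ^ 2) • ((1 - auxS N) * C.map (fun a => (a : ℂ)) * (1 - auxS N)ᵀ) := by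
  ext i j
  set M : Matrix (Fin N) (Fin N) ℂ := C.map (fun a => (a : ℂ)) with hM
  have h1 : (((1 - auxS N) * M * (1 - auxS N)ᵀ : Matrix (Fin N) (Fin N) ℂ)) i j =
      (C i j : ℂ) - (C (i-1) j : ℂ) - ((C i (j-1) : ℂ) - (C (i-1) (j-1) : ℂ)) := by
    rw [sub_mul, one_mul, Matrix.transpose_sub, Matrix.transpose_one, Matrix.mul_sub, mul_one]
    rw [Matrix.sub_apply, Matrix.sub_apply, auxS_mul, mul_auxS_T, Matrix.sub_apply, auxS_mul]
    simp [hM, Matrix.map_apply]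
  rw [Matrix.smul_apply, h1]
  simp only [Matrix.map_apply, mixedDiff, Matrix.of_apply, smul_eq_mul]
  push_cast
  ring

lemma step (N : ℕ) [NeZero N] (F : Matrix (Fin N) (Fin N) ℂ)
    (hF : ∀ t t', F t t' =
      Complex.exp (-2 * Real.pi * Complex.I * ((t : ℕ) : ℂ) * ((t' : ℕ) : ℂ) / N))
    (C : Matrix (Fin N) (Fin N) ℝ) :
    F * (mixedDiff N C).map (fun a => (a : ℂ)) * Fᵀ =
      Matrix.diagonal (fun t => (N : ℂ) * (1 - auxc N t)) *
        (F * C.map (fun a => (a : ℂ)) * Fᵀ) *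
        Matrix.diagonal (fun t => (N : ℂ) * (1 - auxc N t)) := by
  set M := C.map (fun a : ℝ => (a : ℂ)) with hM
  set D0 : Matrix (Fin N) (Fin N) ℂ := Matrix.diagonal (fun t => 1 - auxc N t) with hD0
  have hFL : F * (1 - auxS N) = D0 * F := by
    rw [Matrix.mul_sub, mul_one, F_mul_auxS N F hF, hD0]
    rw [show (Matrix.diagonal fun t => 1 - auxc N t) =
      1 - Matrix.diagonal (auxc N) by rw [← Matrix.diagonal_one, ← Matrix.diagonal_sub]]
    rw [sub_mul, one_mul]
  have hLF : (1 - auxS N)ᵀ * Fᵀ = Fᵀ * D0 := by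
    rw [← Matrix.transpose_mul, hFL, Matrix.transpose_mul, Matrix.diagonal_transpose]
  have hDdiag : Matrix.diagonal (fun t => (N : ℂ) * (1 - auxc N t)) = (N : ℂ) • D0 := by
    rw [hD0, ← Matrix.diagonal_smul]
    congr 1
  rw [mixedDiff_map, Matrix.mul_smul, Matrix.smul_mul, hDdiag]
  rw [Matrix.smul_mul, Matrix.mul_smul, Matrix.smul_mul, smul_smul, ← sq]
  congr 1
  calc F * ((1 - auxS N) * M * (1 - auxS N)ᵀ) * Fᵀ
      = (F * (1 - auxS N)) * M * ((1 - auxS N)ᵀ * Fᵀ) := by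
        simp only [Matrix.mul_assoc]
    _ = D0 * F * M * (Fᵀ * D0) := by rw [hFL, hLF]
    _ = D0 * (F * M * Fᵀ) * D0 := by simp only [Matrix.mul_assoc]

lemma iterStep (N : ℕ) [NeZero N] (F : Matrix (Fin N) (Fin N) ℂ)
    (hF : ∀ t t', F t t' =
      Complex.exp (-2 * Real.pi * Complex.I * ((t : ℕ) : ℂ) * ((t' : ℕ) : ℂ) / N))
    (A : Matrix (Fin N) (Fin N) ℝ) (k : ℕ) :
    F * ((mixedDiff N)^[k] A).map (fun a => (a : ℂ)) * Fᵀ =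
      (Matrix.diagonal (fun t => (N : ℂ) * (1 - auxc N t))) ^ k *
        (F * A.map (fun a => (a : ℂ)) * Fᵀ) *
        (Matrix.diagonal (fun t => (N : ℂ) * (1 - auxc N t))) ^ k := by
  induction k with
  | zero => simp
  | succ k ih =>
      rw [Function.iterate_succ_apply', step N F hF, ih]
      set D := Matrix.diagonal fun t => (N : ℂ) * (1 - auxc N t) with hD
      set X := F * A.map (fun a : ℝ => (a : ℂ)) * Fᵀ with hX
      have hcomm : D * D ^ k = D ^ k * D := (pow_succ' D k).symm.trans (pow_succ D k)
      rw [pow_succ D]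
      calc D * (D ^ k * X * D ^ k) * D = (D * D ^ k) * X * (D ^ k * D) := by
            simp only [Matrix.mul_assoc]
        _ = (D ^ k * D) * X * (D ^ k * D) := by rw [hcomm]

lemma one_sub_auxc_ne_zero (N : ℕ) [NeZero N] (t : Fin N) (ht : t ≠ 0) :
    1 - auxc N t ≠ 0 := by
  have hN : (N : ℂ) ≠ 0 := Nat.cast_ne_zero.mpr (NeZero.ne N)
  intro h
  have hc1 : auxc N t = 1 := by linear_combination -h
  rw [auxc, Complex.exp_eq_one_iff] at hc1
  obtain ⟨n, hn⟩ := hc1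
  have hπ : (Real.pi : ℂ) ≠ 0 := Complex.ofReal_ne_zero.mpr Real.pi_ne_zero
  have hI : Complex.I ≠ 0 := Complex.I_ne_zero
  have key : ((t : ℕ) : ℂ) = ((-n * N : ℤ) : ℂ) := by
    field_simp at hn
    have h2 : ((t : ℕ) : ℂ) * (2 * (Real.pi : ℂ) * Complex.I) =
        ((-n * N : ℤ) : ℂ) * (2 * (Real.pi : ℂ) * Complex.I) := by
      push_cast
      linear_combination (-(2 * (Real.pi : ℂ) * Complex.I)) * hn
    exact mul_right_cancel₀ (mul_ne_zero (mul_ne_zero two_ne_zero hπ) hI) h2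
  have keyZ : ((t : ℕ) : ℤ) = -n * N := by exact_mod_cast key
  have hdvd : (N : ℤ) ∣ ((t : ℕ) : ℤ) := ⟨-n, by linarith [keyZ]⟩
  have hdvdN : N ∣ (t : ℕ) := Int.ofNat_dvd.mp (by exact_mod_cast hdvd)
  have htv : (t : ℕ) ≠ 0 := fun h0 => ht (Fin.ext h0)
  exact htv (Nat.eq_zero_of_dvd_of_lt hdvdN t.isLt)

lemma diag_norm_le (N : ℕ) [NeZero N] (d : Fin N → ℂ) (cst : ℝ) (hcst : 0 ≤ cst)
    (h : ∀ i, ‖d i‖ ≤ cst) :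
    ‖Matrix.toEuclideanCLM (𝕜 := ℂ) (Matrix.diagonal d)‖ ≤ cst := by
  refine ContinuousLinearMap.opNorm_le_bound _ hcst fun x => ?_
  have happ : ∀ i, (Matrix.toEuclideanCLM (𝕜 := ℂ) (Matrix.diagonal d) x) i = d i * x i := by
    intro i
    have h2 := congrFun (Matrix.ofLp_toEuclideanCLM (𝕜 := ℂ) (Matrix.diagonal d) x) i
    simpa [Matrix.toLin'_apply, Matrix.mulVec_diagonal] using h2
  rw [EuclideanSpace.norm_eq, EuclideanSpace.norm_eq]
  rw [show cst * Real.sqrt (∑ i, ‖x i‖ ^ 2) = Real.sqrt (cst ^ 2 * ∑ i, ‖x i‖ ^ 2) by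
    rw [Real.sqrt_mul (sq_nonneg _), Real.sqrt_sq hcst]]
  apply Real.sqrt_le_sqrt
  rw [Finset.mul_sum]
  apply Finset.sum_le_sum
  intro i _
  rw [happ i, norm_mul, mul_pow]
  have hd : ‖d i‖ ≤ cst := by exact h i
  have h3 : ‖d i‖ ^ 2 ≤ cst ^ 2 := pow_le_pow_left₀ (norm_nonneg _) hd 2
  exact mul_le_mul_of_nonneg_right h3 (sq_nonneg _)

theorem offBlock_opNorm_le (N : ℕ) [NeZero N]
    (A : Matrix (Fin N) (Fin N) ℝ) (hsymm : A.IsSymm)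
    (hsum : A.mulVec (fun _ => 1) = 0)
    (F : Matrix (Fin N) (Fin N) ℂ)
    (hF : ∀ t t', F t t' =
      Complex.exp (-2 * Real.pi * Complex.I * ((t : ℕ) : ℂ) * ((t' : ℕ) : ℂ) / N))
    (γ : Fin N → ℂ) (hγ0 : γ 0 = 1)
    (hγ : ∀ t : Fin N, t ≠ 0 →
      γ t = (N : ℂ)⁻¹ * (1 - Complex.exp (-2 * Real.pi * Complex.I * ((t : ℕ) : ℂ) / N))⁻¹)
    (I : Finset (Fin N)) (hI : I.Nonempty) (hJ : Iᶜ.Nonempty)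
    (Ahat : Matrix (Fin N) (Fin N) ℂ)
    (hAhat : Ahat = F * A.map (fun a => (a : ℂ)) * F.transpose)
    (AhatIJ : Matrix (Fin N) (Fin N) ℂ)
    (hAhatIJ : ∀ i j, AhatIJ i j = if i ∈ I ∧ j ∈ Iᶜ then Ahat i j else 0)
    (m : ℕ) (hm : 0 < m) :
    ‖Matrix.toEuclideanCLM (𝕜 := ℂ) AhatIJ‖ ≤
      ((I ×ˢ Iᶜ).sup' (hI.product hJ)
          fun p => ‖γ p.1 * γ p.2‖ ^ m) *
        ‖Matrix.toEuclideanCLM (𝕜 := ℂ)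
          (F * ((mixedDiff N)^[m] A).map (fun a => (a : ℂ)) * F.transpose)‖ := by
  classical
  have hN : (N : ℂ) ≠ 0 := Nat.cast_ne_zero.mpr (NeZero.ne N)
  -- column and row sums of A vanish
  have hrowsum : ∀ b : Fin N, (∑ s, A b s) = 0 := by
    intro b
    have := congrFun hsum b
    simpa [Matrix.mulVec, dotProduct] using this
  have hcolsum : ∀ s : Fin N, (∑ b, A b s) = 0 := by
    intro s
    have h1 : ∀ b : Fin N, A b s = A s b := fun b => (congrFun (congrFun hsymm b) s).symm
    calc (∑ b, A b s) = ∑ b, A s b := Finset.sum_congr rfl (fun b _ => h1 b)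
      _ = 0 := hrowsum s
  have hF0 : ∀ b : Fin N, F 0 b = 1 := by
    intro b
    rw [hF]
    simp
  -- row 0 and column 0 of Ahat vanish
  have hrow0 : ∀ j, Ahat 0 j = 0 := by
    intro j
    rw [hAhat]
    rw [Matrix.mul_apply]
    refine Finset.sum_eq_zero fun s _ => ?_
    have hzero : (F * A.map (fun a => (a : ℂ))) 0 s = 0 := by
      rw [Matrix.mul_apply]
      have : (∑ b, F 0 b * ((A b s : ℝ) : ℂ)) = ((∑ b, A b s : ℝ) : ℂ) := by
        push_cast
        refine Finset.sum_congr rfl fun b _ => ?_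
        rw [hF0 b, one_mul]
      simp only [Matrix.map_apply]
      rw [this, hcolsum s]
      simp
    rw [hzero, zero_mul]
  have hcol0 : ∀ i, Ahat i 0 = 0 := by
    intro i
    rw [hAhat]
    rw [Matrix.mul_apply]
    have hT : ∀ s : Fin N, F.transpose s 0 = 1 := fun s => hF0 s
    have : (∑ s, (F * A.map (fun a => (a : ℂ))) i s * F.transpose s 0)
        = ∑ s, ∑ b, F i b * ((A b s : ℝ) : ℂ) := by
      refine Finset.sum_congr rfl fun s _ => ?_
      rw [hT s, mul_one, Matrix.mul_apply]
      simp [Matrix.map_apply]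
    rw [this, Finset.sum_comm]
    refine Finset.sum_eq_zero fun b _ => ?_
    rw [← Finset.mul_sum]
    have : (∑ s, ((A b s : ℝ) : ℂ)) = ((∑ s, A b s : ℝ) : ℂ) := by push_cast; rfl
    rw [this, hrowsum b]
    simp
  -- γ inverts N (1 - auxc)
  have hγinv : ∀ t : Fin N, t ≠ 0 → γ t * ((N : ℂ) * (1 - auxc N t)) = 1 := by
    intro t ht
    rw [hγ t ht]
    have h1 : 1 - auxc N t ≠ 0 := one_sub_auxc_ne_zero N t ht
    simp only [auxc] at h1 ⊢
    rw [mul_mul_mul_comm, inv_mul_cancel₀ hN, inv_mul_cancel₀ h1, mul_one]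
  -- the diagonal entries
  set g : Fin N → ℂ := fun t => ((N : ℂ) * (1 - auxc N t)) ^ m with hg
  set Bm : Matrix (Fin N) (Fin N) ℂ :=
    F * ((mixedDiff N)^[m] A).map (fun a => (a : ℂ)) * F.transpose with hBm
  have hBmEq : Bm = Matrix.diagonal g * Ahat * Matrix.diagonal g := by
    rw [hBm, iterStep N F hF A m, hAhat, Matrix.diagonal_pow]
    rfl
  set e1 : Fin N → ℂ := fun t => if t ∈ I then γ t ^ m else 0 with he1
  set e2 : Fin N → ℂ := fun t => if t ∈ Iᶜ then γ t ^ m else 0 with he2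
  have hfact : AhatIJ = Matrix.diagonal e1 * Bm * Matrix.diagonal e2 := by
    rw [hBmEq]
    ext i j
    rw [Matrix.mul_diagonal, Matrix.diagonal_mul, Matrix.mul_diagonal, Matrix.diagonal_mul]
    rw [hAhatIJ i j]
    symm
    by_cases hij : i ∈ I ∧ j ∈ Iᶜ
    · rw [if_pos hij]
      have hei : e1 i = γ i ^ m := by rw [he1]; simp [hij.1]
      have hej : e2 j = γ j ^ m := by rw [he2]; simp [hij.2]
      rw [hei, hej]
      by_cases hi0 : i = 0
      · subst hi0
        rw [hrow0 j]
        have : g 0 = 0 := by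
          rw [hg]
          simp [auxc_zero, zero_pow hm.ne']
        rw [this]
        ring
      · by_cases hj0 : j = 0
        · subst hj0
          rw [hcol0 i]
          have : g 0 = 0 := by
            rw [hg]
            simp [auxc_zero, zero_pow hm.ne']
          rw [this]
          ring
        · have h1 : γ i ^ m * g i = 1 := by
            rw [hg, ← mul_pow, hγinv i hi0, one_pow]
          have h2 : γ j ^ m * g j = 1 := by
            rw [hg, ← mul_pow, hγinv j hj0, one_pow]
          calc γ i ^ m * (g i * Ahat i j * g j) * γ j ^ m
              = (γ i ^ m * g i) * (γ j ^ m * g j) * Ahat i j := by ring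
            _ = Ahat i j := by rw [h1, h2]; ring
    · rw [if_neg hij]
      rcases not_and_or.mp hij with hi | hj
      · have : e1 i = 0 := by rw [he1]; simp [hi]
        rw [this]; ring
      · have : e2 j = 0 := by rw [he2]; simp [hj]
        rw [this]; ring
  -- norm bounds
  set a : ℝ := I.sup' hI (fun i => ‖γ i‖ ^ m) with ha
  set b : ℝ := Iᶜ.sup' hJ (fun j => ‖γ j‖ ^ m) with hb
  have ha0 : 0 ≤ a := by
    obtain ⟨i0, hi0⟩ := hI
    exact le_trans (by positivity) (Finset.le_sup' (fun i => ‖γ i‖ ^ m) hi0)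
  have hb0 : 0 ≤ b := by
    obtain ⟨j0, hj0⟩ := hJ
    exact le_trans (by positivity) (Finset.le_sup' (fun j => ‖γ j‖ ^ m) hj0)
  have hE1 : ‖Matrix.toEuclideanCLM (𝕜 := ℂ) (Matrix.diagonal e1)‖ ≤ a := by
    refine diag_norm_le N e1 a ha0 fun i => ?_
    rw [he1]
    by_cases hi : i ∈ I
    · simp only [hi, if_true]
      rw [norm_pow]
      exact Finset.le_sup' (fun i => ‖γ i‖ ^ m) hi
    · simp only [hi, if_false, norm_zero]
      exact ha0
  have hE2 : ‖Matrix.toEuclideanCLM (𝕜 := ℂ) (Matrix.diagonal e2)‖ ≤ b := by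
    refine diag_norm_le N e2 b hb0 fun j => ?_
    rw [he2]
    by_cases hj : j ∈ Iᶜ
    · simp only [hj, if_true]
      rw [norm_pow]
      exact Finset.le_sup' (fun j => ‖γ j‖ ^ m) hj
    · simp only [hj, if_false, norm_zero]
      exact hb0
  have hprod : a * b ≤ (I ×ˢ Iᶜ).sup' (hI.product hJ)
      fun p => ‖γ p.1 * γ p.2‖ ^ m := by
    obtain ⟨i0, hi0m, hi0⟩ := Finset.exists_mem_eq_sup' hI (fun i => ‖γ i‖ ^ m)
    obtain ⟨j0, hj0m, hj0⟩ := Finset.exists_mem_eq_sup' hJ (fun j => ‖γ j‖ ^ m)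
    rw [ha, hb, hi0, hj0]
    have hmem : (i0, j0) ∈ I ×ˢ Iᶜ := Finset.mem_product.mpr ⟨hi0m, hj0m⟩
    have : ‖γ i0‖ ^ m * ‖γ j0‖ ^ m
        = ‖γ i0 * γ j0‖ ^ m := by
      rw [norm_mul, mul_pow]
    rw [this]
    exact Finset.le_sup' (fun p : Fin N × Fin N => ‖γ p.1 * γ p.2‖ ^ m) hmem
  calc ‖Matrix.toEuclideanCLM (𝕜 := ℂ) AhatIJ‖
      = ‖Matrix.toEuclideanCLM (𝕜 := ℂ) (Matrix.diagonal e1) *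
          Matrix.toEuclideanCLM (𝕜 := ℂ) Bm *
          Matrix.toEuclideanCLM (𝕜 := ℂ) (Matrix.diagonal e2)‖ := by
        rw [hfact, _root_.map_mul, _root_.map_mul]
    _ ≤ ‖Matrix.toEuclideanCLM (𝕜 := ℂ) (Matrix.diagonal e1)‖ *
          ‖Matrix.toEuclideanCLM (𝕜 := ℂ) Bm‖ *
          ‖Matrix.toEuclideanCLM (𝕜 := ℂ) (Matrix.diagonal e2)‖ := by
        refine le_trans (norm_mul_le _ _) ?_
        exact mul_le_mul_of_nonneg_right (norm_mul_le _ _) (norm_nonneg _)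
    _ ≤ a * ‖Matrix.toEuclideanCLM (𝕜 := ℂ) Bm‖ * b := by
        refine mul_le_mul ?_ hE2 (norm_nonneg _) (by positivity)
        exact mul_le_mul_of_nonneg_right hE1 (norm_nonneg _)
    _ = (a * b) * ‖Matrix.toEuclideanCLM (𝕜 := ℂ) Bm‖ := by ring
    _ ≤ ((I ×ˢ Iᶜ).sup' (hI.product hJ)
          fun p => ‖γ p.1 * γ p.2‖ ^ m) *
          ‖Matrix.toEuclideanCLM (𝕜 := ℂ) Bm‖ :=
        mul_le_mul_of_nonneg_right hprod (norm_nonneg _)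
end

section
/- Let A ∈ ℝ^{N×N} be symmetric with A·1_N = 0. For a subset I ⊆ {1,…,N} with complement J, let Â = F A Fᵀ and let Â_I denote the matrix equal to on the I×I block and zero elsewhere. Define A^{res} = N^{-2} F* (Â - Â_I) (F*)ᵀ. Then ‖A^{res}‖_op ≤ 3 · max_{t∈J}|γ_t|^m · N · ‖Δ^{(m,m)}A‖_max, provided |γ_t| ≤ 1 for all t. -/
open Complex Matrix

set_option linter.unusedSectionVars false
set_option maxHeartbeats 1000000

namespace ResAux

variable {N : ℕ} [NeZero N]



variable {N : ℕ} [NeZero N]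

/-- root of unity attached to row `t`. -/
noncomputable def u (N : ℕ) (t : Fin N) : ℂ :=
  Complex.exp (-2 * Real.pi * Complex.I * ((t : ℕ) : ℂ) / N)

/-- the DFT matrix. -/
noncomputable def Fm (N : ℕ) : Matrix (Fin N) (Fin N) ℂ :=
  Matrix.of fun t t' =>
    Complex.exp (-2 * Real.pi * Complex.I * ((t : ℕ) : ℂ) * ((t' : ℕ) : ℂ) / N)

lemma geom_zero {c : ℂ} (h1 : c ^ N = 1) (hc : c ≠ 1) : ∑ k : Fin N, c ^ (k : ℕ) = 0 := by
  rw [Fin.sum_univ_eq_sum_range (fun i => c ^ i), geom_sum_eq hc, h1, sub_self, zero_div]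

lemma u_zero : u N 0 = 1 := by simp [u]

lemma u_pow (t : Fin N) : u N t ^ N = 1 := by
  rw [u, ← Complex.exp_nat_mul]
  have hN : (N : ℂ) ≠ 0 := Nat.cast_ne_zero.2 (NeZero.ne N)
  have : (N : ℂ) * (-2 * Real.pi * Complex.I * ((t : ℕ) : ℂ) / N)
      = (-(t : ℕ) : ℤ) * (2 * Real.pi * Complex.I) := by
    push_cast
    field_simp
  rw [this, Complex.exp_int_mul_two_pi_mul_I]

lemma conj_u (t : Fin N) :
    (starRingEnd ℂ) (u N t) = Complex.exp (2 * Real.pi * Complex.I * ((t : ℕ) : ℂ) / N) := by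
  rw [u, ← Complex.exp_conj]
  congr 1
  simp [map_div₀, map_ofNat]

lemma pow_mod_of_pow_eq_one {c : ℂ} (h : c ^ N = 1) (a : ℕ) : c ^ (a % N) = c ^ a := by
  conv_rhs => rw [← Nat.div_add_mod a N, pow_add, pow_mul, h, one_pow, one_mul]

lemma Fm_apply_pow (t k : Fin N) : Fm N t k = u N t ^ (k : ℕ) := by
  rw [Fm, u, ← Complex.exp_nat_mul]
  show Complex.exp _ = _
  congr 1
  ring

lemma Fm_shift (t k : Fin N) : Fm N t (k + 1) = u N t * Fm N t k := by
  rw [Fm_apply_pow, Fm_apply_pow]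
  have hv : ((k + 1 : Fin N) : ℕ) = (k.val + 1) % N := by
    rw [Fin.val_add, Fin.val_one', Nat.add_mod k.val (1 % N) N,
      Nat.mod_mod_of_dvd _ dvd_rfl, ← Nat.add_mod]
  rw [hv, pow_mod_of_pow_eq_one (u_pow t), pow_succ]
  ring


variable {N : ℕ} [NeZero N]
lemma two_pi_I_ne : (2 * (Real.pi : ℂ) * Complex.I) ≠ 0 := by
  simp [Real.pi_ne_zero, Complex.I_ne_zero, Complex.ofReal_ne_zero]

lemma u_mul_conj_self (t : Fin N) : u N t * (starRingEnd ℂ) (u N t) = 1 := by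
  rw [conj_u, u, ← Complex.exp_add, ← Complex.exp_zero]
  congr 1
  ring

lemma u_mul_conj_eq_one {t s : Fin N} (h : u N t * (starRingEnd ℂ) (u N s) = 1) : t = s := by
  rw [conj_u, u, ← Complex.exp_add, Complex.exp_eq_one_iff] at h
  obtain ⟨n, hn⟩ := h
  have hN : (N : ℂ) ≠ 0 := Nat.cast_ne_zero.2 (NeZero.ne N)
  have h5 : (2 * (Real.pi : ℂ) * Complex.I) * (((s : ℕ) : ℂ) - ((t : ℕ) : ℂ))
      = (2 * (Real.pi : ℂ) * Complex.I) * ((n : ℂ) * N) := by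
    have he : (2 * (Real.pi : ℂ) * Complex.I) * (((s : ℕ) : ℂ) - ((t : ℕ) : ℂ))
        = N * (-2 * Real.pi * Complex.I * ((t : ℕ) : ℂ) / N
            + 2 * Real.pi * Complex.I * ((s : ℕ) : ℂ) / N) := by
      field_simp
      ring
    rw [he, hn]
    ring
  have h6 := mul_left_cancel₀ two_pi_I_ne h5
  have h7 : ((s : ℕ) : ℤ) - ((t : ℕ) : ℤ) = n * N := by exact_mod_cast h6
  have h8 : (N : ℤ) ∣ ((s : ℕ) : ℤ) - ((t : ℕ) : ℤ) := ⟨n, by linarith⟩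
  have h9 := Int.eq_zero_of_abs_lt_dvd h8 (by
    have := s.isLt; have := t.isLt
    rw [abs_sub_lt_iff]
    constructor <;> [skip; skip] <;> push_cast <;> omega)
  have : (s : ℕ) = (t : ℕ) := by omega
  exact (Fin.ext this).symm

lemma u_eq_one {t : Fin N} (h : u N t = 1) : t = 0 :=
  u_mul_conj_eq_one (by rw [h, u_zero]; simp)

lemma colsum_of {M : Matrix (Fin N) (Fin N) ℝ} (hsy : M.IsSymm)
    (h : ∀ k, ∑ l, M k l = 0) : ∀ l, ∑ k, M k l = 0 := by
  intro l
  rw [Finset.sum_congr rfl fun k _ => (hsy.apply k l).symm]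
  exact h l

lemma Fm_mul_conjTranspose : Fm N * (Fm N)ᴴ = (N : ℂ) • 1 := by
  ext t s
  rw [Matrix.mul_apply]
  have hsummand : ∀ k : Fin N, Fm N t k * (Fm N)ᴴ k s
      = (u N t * (starRingEnd ℂ) (u N s)) ^ (k : ℕ) := by
    intro k
    rw [Matrix.conjTranspose_apply, Fm_apply_pow, Fm_apply_pow, mul_pow, ← map_pow]
    rfl
  rw [Finset.sum_congr rfl (fun k _ => hsummand k)]
  by_cases h : t = s
  · subst h
    simp [u_mul_conj_self, Matrix.smul_apply, Matrix.one_apply]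
  · rw [geom_zero ?h1 ?hc]
    · simp [Matrix.smul_apply, Matrix.one_apply, h]
    case h1 => rw [mul_pow, u_pow, ← map_pow, u_pow]; simp
    case hc => exact fun hc => h (u_mul_conj_eq_one hc)

variable {N : ℕ} [NeZero N]
noncomputable def hatS (N : ℕ) [NeZero N] (M : Matrix (Fin N) (Fin N) ℝ) (t t' : Fin N) : ℂ :=
  ∑ k, ∑ l, Fm N t k * Fm N t' l * (M k l : ℂ)

lemma shift_sum (t : Fin N) (g : Fin N → ℂ) :
    ∑ k, Fm N t k * g (k - 1) = u N t * ∑ k, Fm N t k * g k := by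
  rw [Finset.mul_sum]
  apply Fintype.sum_equiv (Equiv.subRight (1 : Fin N))
  intro x
  simp only [Equiv.subRight_apply]
  have hx : Fm N t x = u N t * Fm N t (x - 1) := by
    conv_lhs => rw [← sub_add_cancel x 1]
    exact Fm_shift t (x - 1)
  rw [hx]
  ring

lemma hatS_comm (M : Matrix (Fin N) (Fin N) ℝ) (t t' : Fin N) :
    hatS N M t t' = ∑ l, ∑ k, Fm N t k * Fm N t' l * (M k l : ℂ) := Finset.sum_comm

lemma hatS_eq (M : Matrix (Fin N) (Fin N) ℝ) (t t' : Fin N) :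
    hatS N M t t' = ∑ k, Fm N t k * (∑ l, Fm N t' l * (M k l : ℂ)) := by
  unfold hatS
  refine Finset.sum_congr rfl fun k _ => ?_
  rw [Finset.mul_sum]
  exact Finset.sum_congr rfl fun l _ => by ring

lemma hatS_eq' (M : Matrix (Fin N) (Fin N) ℝ) (t t' : Fin N) :
    hatS N M t t' = ∑ l, Fm N t' l * (∑ k, Fm N t k * (M k l : ℂ)) := by
  rw [hatS_comm]
  refine Finset.sum_congr rfl fun l _ => ?_
  rw [Finset.mul_sum]
  exact Finset.sum_congr rfl fun k _ => by ring

lemma hatS_row (M : Matrix (Fin N) (Fin N) ℝ) (t t' : Fin N) :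
    hatS N (Matrix.of fun k l => M (k - 1) l) t t' = u N t * hatS N M t t' := by
  rw [hatS_eq, hatS_eq]
  simp only [Matrix.of_apply]
  exact shift_sum t (fun k' => ∑ l, Fm N t' l * (M k' l : ℂ))

lemma hatS_col (M : Matrix (Fin N) (Fin N) ℝ) (t t' : Fin N) :
    hatS N (Matrix.of fun k l => M k (l - 1)) t t' = u N t' * hatS N M t t' := by
  rw [hatS_eq', hatS_eq']
  simp only [Matrix.of_apply]
  exact shift_sum t' (fun l' => ∑ k, Fm N t k * (M k l' : ℂ))

lemma hatS_both (M : Matrix (Fin N) (Fin N) ℝ) (t t' : Fin N) :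
    hatS N (Matrix.of fun k l => M (k - 1) (l - 1)) t t' = u N t * u N t' * hatS N M t t' := by
  have h1 : (Matrix.of fun k l => M (k - 1) (l - 1))
      = (Matrix.of fun k l => (Matrix.of fun a b => M a (b - 1) : Matrix (Fin N) (Fin N) ℝ) (k - 1) l) := rfl
  rw [h1, hatS_row, hatS_col]
  ring

lemma hatS_mixedDiff (M : Matrix (Fin N) (Fin N) ℝ) (t t' : Fin N) :
    hatS N (mixedDiff N M) t t'
      = (N : ℂ) ^ 2 * (1 - u N t) * (1 - u N t') * hatS N M t t' := by
  have expand : hatS N (mixedDiff N M) t t'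
      = (N : ℂ) ^ 2 * (hatS N M t t' - hatS N (Matrix.of fun k l => M (k - 1) l) t t'
          - hatS N (Matrix.of fun k l => M k (l - 1)) t t'
          + hatS N (Matrix.of fun k l => M (k - 1) (l - 1)) t t') := by
    simp only [hatS, mixedDiff, Matrix.of_apply, Finset.mul_sum, ← Finset.sum_sub_distrib,
      ← Finset.sum_add_distrib]
    refine Finset.sum_congr rfl fun k _ => Finset.sum_congr rfl fun l _ => ?_
    push_cast
    ring
  rw [expand, hatS_row, hatS_col, hatS_both]
  ring

lemma hatS_zero_left (M : Matrix (Fin N) (Fin N) ℝ) (h : ∀ l, ∑ k, M k l = 0) (t' : Fin N) :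
    hatS N M 0 t' = 0 := by
  rw [hatS_comm]
  have : ∀ l, ∑ k, Fm N 0 k * Fm N t' l * (M k l : ℂ) = Fm N t' l * ∑ k, (M k l : ℂ) := by
    intro l
    rw [Finset.mul_sum]
    refine Finset.sum_congr rfl fun k _ => ?_
    rw [Fm_apply_pow, u_zero, one_pow]
    ring
  rw [Finset.sum_congr rfl fun l _ => this l]
  have hz : ∀ l : Fin N, ∑ k, (M k l : ℂ) = 0 := by
    intro l
    rw [← Complex.ofReal_sum]
    rw [h l]
    simp
  simp [hz]

lemma hatS_zero_right (M : Matrix (Fin N) (Fin N) ℝ) (h : ∀ k, ∑ l, M k l = 0) (t : Fin N) :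
    hatS N M t 0 = 0 := by
  unfold hatS
  have key : ∀ k, ∑ l, Fm N t k * Fm N 0 l * (M k l : ℂ) = Fm N t k * ∑ l, (M k l : ℂ) := by
    intro k
    rw [Finset.mul_sum]
    refine Finset.sum_congr rfl fun l _ => ?_
    rw [Fm_apply_pow 0 l, u_zero, one_pow]
    ring
  rw [Finset.sum_congr rfl fun k _ => key k]
  have hz : ∀ k : Fin N, ∑ l, (M k l : ℂ) = 0 := by
    intro k
    rw [← Complex.ofReal_sum, h k]
    simp
  simp [hz]

lemma step (γ : Fin N → ℂ) (hγ0 : γ 0 = 1)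
    (hγ : ∀ t : Fin N, t ≠ 0 → γ t = (N : ℂ)⁻¹ * (1 - u N t)⁻¹)
    (M : Matrix (Fin N) (Fin N) ℝ) (h0 : ∀ k, ∑ l, M k l = 0) (hc0 : ∀ l, ∑ k, M k l = 0)
    (t t' : Fin N) :
    hatS N M t t' = γ t * γ t' * hatS N (mixedDiff N M) t t' := by
  rw [hatS_mixedDiff]
  by_cases ht : t = 0
  · subst ht
    rw [hatS_zero_left M hc0, u_zero]
    ring
  by_cases ht' : t' = 0
  · subst ht'
    rw [hatS_zero_right M h0, u_zero]
    ring
  · rw [hγ t ht, hγ t' ht']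
    have hN : (N : ℂ) ≠ 0 := Nat.cast_ne_zero.2 (NeZero.ne N)
    have h1 : (1 : ℂ) - u N t ≠ 0 := sub_ne_zero.2 fun h => ht (u_eq_one h.symm)
    have h2 : (1 : ℂ) - u N t' ≠ 0 := sub_ne_zero.2 fun h => ht' (u_eq_one h.symm)
    field_simp

variable {N : ℕ} [NeZero N]

lemma mixedDiff_isSymm {M : Matrix (Fin N) (Fin N) ℝ} (h : M.IsSymm) :
    (mixedDiff N M).IsSymm := by
  rw [Matrix.IsSymm]
  ext i j
  simp only [mixedDiff, Matrix.transpose_apply, Matrix.of_apply]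
  have hs : ∀ a b, M a b = M b a := fun a b => (h.apply a b).symm
  rw [hs j i, hs (j - 1) i, hs j (i - 1), hs (j - 1) (i - 1)]
  ring

lemma mixedDiff_rowsum {M : Matrix (Fin N) (Fin N) ℝ} (h : ∀ k, ∑ l, M k l = 0) :
    ∀ k, ∑ l, mixedDiff N M k l = 0 := by
  intro k
  simp only [mixedDiff, Matrix.of_apply]
  rw [← Finset.mul_sum]
  have e3 : ∑ l : Fin N, M k (l - 1) = ∑ l, M k l :=
    Fintype.sum_equiv (Equiv.subRight 1) _ _ fun x => rfl
  have e4 : ∑ l : Fin N, M (k - 1) (l - 1) = ∑ l, M (k - 1) l :=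
    Fintype.sum_equiv (Equiv.subRight 1) _ _ fun x => rfl
  rw [Finset.sum_add_distrib, Finset.sum_sub_distrib, Finset.sum_sub_distrib, e3, e4,
    h k, h (k - 1)]
  ring

lemma iterate_isSymm {M : Matrix (Fin N) (Fin N) ℝ} (h : M.IsSymm) (m : ℕ) :
    ((mixedDiff N)^[m] M).IsSymm := by
  induction m generalizing M with
  | zero => exact h
  | succ m ih => rw [Function.iterate_succ_apply]; exact ih (mixedDiff_isSymm h)

lemma iterate_rowsum {M : Matrix (Fin N) (Fin N) ℝ} (h : ∀ k, ∑ l, M k l = 0) (m : ℕ) :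
    ∀ k, ∑ l, ((mixedDiff N)^[m] M) k l = 0 := by
  induction m generalizing M with
  | zero => exact h
  | succ m ih => rw [Function.iterate_succ_apply]; exact ih (mixedDiff_rowsum h)


variable {N : ℕ} [NeZero N]
open scoped Matrix.Norms.L2Operator

lemma opNorm_le_of_entries (M : Matrix (Fin N) (Fin N) ℂ) (c : ℝ) (hc : 0 ≤ c)
    (h : ∀ i j, ‖M i j‖ ≤ c) : ‖M‖ ≤ N * c := by
  rw [Matrix.l2_opNorm_def]
  refine ContinuousLinearMap.opNorm_le_bound _ (by positivity) fun x => ?_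
  change ‖Matrix.toEuclideanLin (𝕜 := ℂ) M x‖ ≤ _
  rw [Matrix.toEuclideanLin_apply]
  set y := x.ofLp with hy
  have hx : ‖x‖ = Real.sqrt (∑ j, ‖y j‖ ^ 2) := by rw [EuclideanSpace.norm_eq]
  have hnx : ‖WithLp.toLp 2 (M *ᵥ y)‖
      = Real.sqrt (∑ i, ‖(M *ᵥ y) i‖ ^ 2) := by rw [EuclideanSpace.norm_eq]
  rw [hnx, hx]
  have hR : ∀ i, ‖(M *ᵥ y) i‖ ≤ c * ∑ j, ‖y j‖ := by
    intro i
    have : (M *ᵥ y) i = ∑ j, M i j * y j := by simp [Matrix.mulVec, dotProduct]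
    rw [this]
    calc ‖∑ j, M i j * y j‖ ≤ ∑ j, ‖M i j * y j‖ := norm_sum_le _ _
      _ ≤ ∑ j, c * ‖y j‖ := Finset.sum_le_sum fun j _ => by
          rw [norm_mul]
          exact mul_le_mul_of_nonneg_right (h i j) (norm_nonneg _)
      _ = c * ∑ j, ‖y j‖ := (Finset.mul_sum _ _ _).symm
  have hsumy : ∑ j, ‖y j‖ ≤ Real.sqrt N * Real.sqrt (∑ j, ‖y j‖ ^ 2) := by
    rw [← Real.sqrt_mul (Nat.cast_nonneg N)]
    apply Real.le_sqrt_of_sq_le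
    have h1 := sq_sum_le_card_mul_sum_sq (s := (Finset.univ : Finset (Fin N)))
      (f := fun j => ‖y j‖)
    simpa using h1
  have hss : Real.sqrt N * Real.sqrt N = (N : ℝ) := Real.mul_self_sqrt (Nat.cast_nonneg N)
  calc Real.sqrt (∑ i, ‖(M *ᵥ y) i‖ ^ 2)
      ≤ Real.sqrt (∑ _i : Fin N, (c * ∑ j, ‖y j‖) ^ 2) :=
        Real.sqrt_le_sqrt (Finset.sum_le_sum fun i _ =>
          pow_le_pow_left₀ (norm_nonneg _) (hR i) 2)
    _ = Real.sqrt ((N : ℝ) * (c * ∑ j, ‖y j‖) ^ 2) := by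
        rw [Finset.sum_const]
        simp [nsmul_eq_mul]
    _ = Real.sqrt N * (c * ∑ j, ‖y j‖) := by
        rw [Real.sqrt_mul (Nat.cast_nonneg N), Real.sqrt_sq (by positivity)]
    _ ≤ Real.sqrt N * (c * (Real.sqrt N * Real.sqrt (∑ j, ‖y j‖ ^ 2))) := by gcongr
    _ = (N : ℝ) * c * Real.sqrt (∑ j, ‖y j‖ ^ 2) := by
        linear_combination (c * Real.sqrt (∑ j, ‖y j‖ ^ 2)) * hss

lemma opNorm_diagonal_le (d : Fin N → ℂ) (c : ℝ) (hc : 0 ≤ c) (h : ∀ i, ‖d i‖ ≤ c) :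
    ‖(Matrix.diagonal d : Matrix (Fin N) (Fin N) ℂ)‖ ≤ c := by
  rw [Matrix.l2_opNorm_def]
  refine ContinuousLinearMap.opNorm_le_bound _ hc fun x => ?_
  change ‖Matrix.toEuclideanLin (𝕜 := ℂ) (Matrix.diagonal d) x‖ ≤ _
  rw [Matrix.toEuclideanLin_apply]
  set y := x.ofLp with hy
  have hx : ‖x‖ = Real.sqrt (∑ j, ‖y j‖ ^ 2) := by rw [EuclideanSpace.norm_eq]
  have hnx : ‖WithLp.toLp 2 (Matrix.diagonal d *ᵥ y)‖
      = Real.sqrt (∑ i, ‖(Matrix.diagonal d *ᵥ y) i‖ ^ 2) := by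
    rw [EuclideanSpace.norm_eq]
  rw [hnx, hx]
  calc Real.sqrt (∑ i, ‖(Matrix.diagonal d *ᵥ y) i‖ ^ 2)
      ≤ Real.sqrt (∑ i, c ^ 2 * ‖y i‖ ^ 2) := by
        apply Real.sqrt_le_sqrt
        refine Finset.sum_le_sum fun i _ => ?_
        rw [Matrix.mulVec_diagonal, norm_mul, mul_pow]
        exact mul_le_mul_of_nonneg_right
          (pow_le_pow_left₀ (norm_nonneg _) (h i) 2) (by positivity)
    _ = c * Real.sqrt (∑ i, ‖y i‖ ^ 2) := by
        rw [← Finset.mul_sum, Real.sqrt_mul (by positivity), Real.sqrt_sq hc]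

lemma conjTranspose_mul_Fm : (Fm N)ᴴ * Fm N = (N : ℂ) • 1 := by
  have hN : (N : ℂ) ≠ 0 := Nat.cast_ne_zero.2 (NeZero.ne N)
  have h1 : Fm N * ((N : ℂ)⁻¹ • (Fm N)ᴴ) = 1 := by
    rw [Matrix.mul_smul, Fm_mul_conjTranspose, smul_smul, inv_mul_cancel₀ hN, one_smul]
  have h2 := mul_eq_one_comm.mp h1
  have h3 : (N : ℂ)⁻¹ • ((Fm N)ᴴ * Fm N) = 1 := by rw [← Matrix.smul_mul]; exact h2
  calc (Fm N)ᴴ * Fm N = (N : ℂ) • ((N : ℂ)⁻¹ • ((Fm N)ᴴ * Fm N)) := by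
        rw [smul_smul, mul_inv_cancel₀ hN, one_smul]
    _ = (N : ℂ) • (1 : Matrix (Fin N) (Fin N) ℂ) := by rw [h3]

lemma norm_Fm : ‖Fm N‖ = Real.sqrt N := by
  haveI : Nonempty (Fin N) := ⟨⟨0, Nat.pos_of_ne_zero (NeZero.ne N)⟩⟩
  have hsq : ‖Fm N‖ * ‖Fm N‖ = (N : ℝ) := by
    rw [← CStarRing.norm_star_mul_self (x := Fm N)]
    have : star (Fm N) = (Fm N)ᴴ := rfl
    rw [this, conjTranspose_mul_Fm, norm_smul]
    simp [Matrix.cstar_norm_def]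
  rw [← Real.sqrt_mul_self (norm_nonneg (Fm N)), hsq]

lemma norm_Fm_conjTranspose : ‖(Fm N)ᴴ‖ = Real.sqrt N := by
  rw [Matrix.l2_opNorm_conjTranspose, norm_Fm]


lemma hat_entry (M : Matrix (Fin N) (Fin N) ℝ) (t t' : Fin N) :
    (Fm N * M.map (fun a => (a : ℂ)) * (Fm N)ᵀ) t t' = hatS N M t t' := by
  rw [Matrix.mul_apply, hatS_comm]
  simp only [Matrix.mul_apply, Matrix.transpose_apply, Matrix.map_apply, Finset.sum_mul]
  exact Finset.sum_congr rfl fun l _ => Finset.sum_congr rfl fun k _ => by ring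

lemma iter (γ : Fin N → ℂ) (hγ0 : γ 0 = 1)
    (hγ : ∀ t : Fin N, t ≠ 0 → γ t = (N : ℂ)⁻¹ * (1 - u N t)⁻¹) (m : ℕ) :
    ∀ (M : Matrix (Fin N) (Fin N) ℝ), M.IsSymm → (∀ k, ∑ l, M k l = 0) → ∀ t t',
      hatS N M t t' = γ t ^ m * γ t' ^ m * hatS N ((mixedDiff N)^[m] M) t t' := by
  induction m with
  | zero => intro M _ _ t t'; simp
  | succ m ih =>
    intro M hsy h0 t t'
    rw [step γ hγ0 hγ M h0 (colsum_of hsy h0) t t', Function.iterate_succ_apply,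
      ih (mixedDiff N M) (mixedDiff_isSymm hsy) (mixedDiff_rowsum h0) t t']
    ring

lemma opNorm_mul3_le (X Y Z : Matrix (Fin N) (Fin N) ℂ) {a b c : ℝ}
    (ha : ‖X‖ ≤ a) (hb : ‖Y‖ ≤ b) (hc : ‖Z‖ ≤ c)
    (ha0 : 0 ≤ a) (hb0 : 0 ≤ b) (hc0 : 0 ≤ c) : ‖X * Y * Z‖ ≤ a * b * c :=
  calc ‖X * Y * Z‖ ≤ ‖X * Y‖ * ‖Z‖ := norm_mul_le _ _
    _ ≤ (a * b) * c :=
      mul_le_mul (le_trans (norm_mul_le _ _) (mul_le_mul ha hb (norm_nonneg _) ha0)) hc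
        (norm_nonneg _) (mul_nonneg ha0 hb0)

end ResAux

open scoped Matrix.Norms.L2Operator in
theorem residual_opNorm_le (N : ℕ) [NeZero N]
    (A : Matrix (Fin N) (Fin N) ℝ) (hsymm : A.IsSymm)
    (hsum : A.mulVec (fun _ => 1) = 0)
    (F : Matrix (Fin N) (Fin N) ℂ)
    (hF : ∀ t t', F t t' =
      Complex.exp (-2 * Real.pi * Complex.I * ((t : ℕ) : ℂ) * ((t' : ℕ) : ℂ) / N))
    (γ : Fin N → ℂ) (hγ0 : γ 0 = 1)
    (hγ : ∀ t : Fin N, t ≠ 0 →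
      γ t = (N : ℂ)⁻¹ * (1 - Complex.exp (-2 * Real.pi * Complex.I * ((t : ℕ) : ℂ) / N))⁻¹)
    (hγle : ∀ t, ‖γ t‖ ≤ 1)
    (I : Finset (Fin N)) (hJ : Iᶜ.Nonempty)
    (Ahat : Matrix (Fin N) (Fin N) ℂ)
    (hAhat : Ahat = F * A.map (fun a => (a : ℂ)) * F.transpose)
    (AhatI : Matrix (Fin N) (Fin N) ℂ)
    (hAhatI : ∀ i j, AhatI i j = if i ∈ I ∧ j ∈ I then Ahat i j else 0)
    (Ares : Matrix (Fin N) (Fin N) ℂ)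
    (hAres : Ares = ((N : ℂ) ^ 2)⁻¹ •
      (F.conjTranspose * (Ahat - AhatI) * F.conjTranspose.transpose))
    (m : ℕ) (hm : 0 < m) :
    ‖Matrix.toEuclideanCLM (𝕜 := ℂ) Ares‖ ≤
      3 * (Iᶜ.sup' hJ fun t => (‖γ t‖) ^ m) * N *
        ((Finset.univ : Finset (Fin N × Fin N)).sup'
          (Finset.univ_nonempty)
          fun p => |((mixedDiff N)^[m] A) p.1 p.2|) := by
  classical
  have hNpos : 0 < (N : ℝ) := by exact_mod_cast Nat.pos_of_ne_zero (NeZero.ne N)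
  haveI : Nonempty (Fin N) := ⟨⟨0, Nat.pos_of_ne_zero (NeZero.ne N)⟩⟩
  have hFeq : F = ResAux.Fm N := by ext t t'; rw [hF t t']; rfl
  set C : Matrix (Fin N) (Fin N) ℝ := (mixedDiff N)^[m] A with hC
  set g : ℝ := Iᶜ.sup' hJ fun t => (‖γ t‖) ^ m with hg
  set Mx : ℝ := Finset.univ.sup' Finset.univ_nonempty
    (fun p : Fin N × Fin N => |C p.1 p.2|) with hMx
  rw [← Matrix.cstar_norm_def]
  have hMx0 : 0 ≤ Mx := by
    rw [hMx]
    exact le_trans (abs_nonneg (C 0 0))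
      (Finset.le_sup' (fun p : Fin N × Fin N => |C p.1 p.2|)
        (Finset.mem_univ ((0 : Fin N), (0 : Fin N))))
  obtain ⟨t₀, ht₀⟩ := hJ
  have hg0 : 0 ≤ g := by
    rw [hg]
    exact le_trans (pow_nonneg (norm_nonneg (γ t₀)) m)
      (Finset.le_sup' (fun t => (‖γ t‖) ^ m) ht₀)
  have hrow : ∀ k, ∑ l, A k l = 0 := by
    intro k
    have := congrFun hsum k
    simpa [Matrix.mulVec, dotProduct] using this
  have hγ' : ∀ t : Fin N, t ≠ 0 → γ t = (N : ℂ)⁻¹ * (1 - ResAux.u N t)⁻¹ := fun t ht => hγ t ht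
  have hAhat' : ∀ t t', Ahat t t' = ResAux.hatS N A t t' := by
    intro t t'
    rw [hAhat, hFeq, ResAux.hat_entry]
  have hiter := ResAux.iter γ hγ0 hγ' m A hsymm hrow
  set D : Matrix (Fin N) (Fin N) ℂ := Matrix.diagonal (fun t => γ t ^ m) with hD
  set Chat : Matrix (Fin N) (Fin N) ℂ :=
    ResAux.Fm N * C.map (fun a => (a : ℂ)) * (ResAux.Fm N)ᵀ with hChat
  have hAhatD : Ahat = D * Chat * D := by
    ext t t'
    rw [hAhat', hiter t t', Matrix.mul_diagonal, Matrix.diagonal_mul, hChat,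
      ResAux.hat_entry]
    ring
  set p : Fin N → ℂ := fun t => if t ∈ I then 1 else 0 with hp
  set q : Fin N → ℂ := fun t => if t ∈ I then 0 else 1 with hq
  set P : Matrix (Fin N) (Fin N) ℂ := Matrix.diagonal p with hP
  set Q : Matrix (Fin N) (Fin N) ℂ := Matrix.diagonal q with hQ
  have hBdecomp : Ahat - AhatI = Q * Ahat + P * Ahat * Q := by
    ext i j
    simp only [Matrix.sub_apply, Matrix.add_apply, hP, hQ]
    rw [Matrix.diagonal_mul, Matrix.mul_diagonal, Matrix.diagonal_mul, hAhatI]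
    by_cases hi : i ∈ I <;> by_cases hj : j ∈ I <;> simp [hp, hq, hi, hj]
  have hFsym' : ∀ i j : Fin N, ResAux.Fm N i j = ResAux.Fm N j i := by
    intro i j
    show Complex.exp _ = Complex.exp _
    congr 1
    ring
  have hFsymT : (ResAux.Fm N)ᵀ = ResAux.Fm N := by
    ext i j
    rw [Matrix.transpose_apply, hFsym' j i]
  have hFHt : (ResAux.Fm N)ᴴᵀ = (ResAux.Fm N)ᴴ := by
    ext i j
    rw [Matrix.transpose_apply, Matrix.conjTranspose_apply, Matrix.conjTranspose_apply,
      hFsym' i j]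
  have hAres' : Ares = ((N : ℂ) ^ 2)⁻¹ •
      ((ResAux.Fm N)ᴴ * (Q * Ahat + P * Ahat * Q) * (ResAux.Fm N)ᴴ) := by
    rw [hAres, hFeq, hFHt, hBdecomp]
  have hnormF : ‖(ResAux.Fm N)ᴴ‖ = Real.sqrt N := ResAux.norm_Fm_conjTranspose
  have hsqrt0 : (0 : ℝ) ≤ Real.sqrt N := Real.sqrt_nonneg _
  have hNMx : 0 ≤ (N : ℝ) * Mx := mul_nonneg (le_of_lt hNpos) hMx0
  have hCm : ‖C.map (fun a => (a : ℂ))‖ ≤ (N : ℝ) * Mx := by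
    apply ResAux.opNorm_le_of_entries _ _ hMx0
    intro i j
    rw [Matrix.map_apply, Complex.norm_real, Real.norm_eq_abs]
    exact Finset.le_sup' (fun p : Fin N × Fin N => |C p.1 p.2|) (Finset.mem_univ (i, j))
  have hX0 : 0 ≤ Real.sqrt N * ((N : ℝ) * Mx) * Real.sqrt N :=
    mul_nonneg (mul_nonneg hsqrt0 hNMx) hsqrt0
  have hChatn : ‖Chat‖ ≤ Real.sqrt N * ((N : ℝ) * Mx) * Real.sqrt N := by
    rw [hChat]
    refine ResAux.opNorm_mul3_le _ _ _ ?_ hCm ?_ hsqrt0 hNMx hsqrt0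
    · rw [ResAux.norm_Fm]
    · rw [hFsymT, ResAux.norm_Fm]
  have hD1 : ‖D‖ ≤ 1 := by
    apply ResAux.opNorm_diagonal_le _ _ zero_le_one
    intro t
    rw [norm_pow]
    exact pow_le_one₀ (norm_nonneg _) (hγle t)
  have hQD : ‖Q * D‖ ≤ g := by
    rw [hQ, hD, Matrix.diagonal_mul_diagonal]
    apply ResAux.opNorm_diagonal_le _ _ hg0
    intro t
    by_cases ht : t ∈ I
    · simpa [hq, ht] using hg0
    · rw [hq]
      simp only [ht, if_false, one_mul]
      rw [norm_pow]
      exact Finset.le_sup' (fun t => (‖γ t‖) ^ m) (Finset.mem_compl.mpr ht)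
  have hDQ : ‖D * Q‖ ≤ g := by
    rw [hQ, hD, Matrix.diagonal_mul_diagonal]
    apply ResAux.opNorm_diagonal_le _ _ hg0
    intro t
    by_cases ht : t ∈ I
    · simpa [hq, ht] using hg0
    · rw [hq]
      simp only [ht, if_false, mul_one]
      rw [norm_pow]
      exact Finset.le_sup' (fun t => (‖γ t‖) ^ m) (Finset.mem_compl.mpr ht)
  have hPD : ‖P * D‖ ≤ 1 := by
    rw [hP, hD, Matrix.diagonal_mul_diagonal]
    apply ResAux.opNorm_diagonal_le _ _ zero_le_one
    intro t
    by_cases ht : t ∈ I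
    · rw [hp]
      simp only [ht, if_true, one_mul]
      rw [norm_pow]
      exact pow_le_one₀ (norm_nonneg _) (hγle t)
    · simp [hp, ht]
  have hQA : ‖Q * Ahat‖ ≤ g * (Real.sqrt N * ((N : ℝ) * Mx) * Real.sqrt N) * 1 := by
    have hre : Q * Ahat = (Q * D) * Chat * D := by
      rw [hAhatD]
      simp only [Matrix.mul_assoc]
    rw [hre]
    exact ResAux.opNorm_mul3_le _ _ _ hQD hChatn hD1 hg0 hX0 zero_le_one
  have hPAQ : ‖P * Ahat * Q‖ ≤ 1 * (Real.sqrt N * ((N : ℝ) * Mx) * Real.sqrt N) * g := by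
    have hre : P * Ahat * Q = (P * D) * Chat * (D * Q) := by
      rw [hAhatD]
      simp only [Matrix.mul_assoc]
    rw [hre]
    exact ResAux.opNorm_mul3_le _ _ _ hPD hChatn hDQ zero_le_one hX0 hg0
  have hB : ‖Q * Ahat + P * Ahat * Q‖
      ≤ 2 * (g * (Real.sqrt N * ((N : ℝ) * Mx) * Real.sqrt N)) := by
    refine le_trans (norm_add_le _ _) ?_
    have := hQA
    have := hPAQ
    linarith
  have h2g0 : 0 ≤ 2 * (g * (Real.sqrt N * ((N : ℝ) * Mx) * Real.sqrt N)) := by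
    have := mul_nonneg hg0 hX0
    linarith
  have hfin : ‖Ares‖ ≤ ((N : ℝ) ^ 2)⁻¹ *
      (Real.sqrt N * (2 * (g * (Real.sqrt N * ((N : ℝ) * Mx) * Real.sqrt N))) * Real.sqrt N) := by
    rw [hAres', norm_smul]
    have hns : ‖((N : ℂ) ^ 2)⁻¹‖ = ((N : ℝ) ^ 2)⁻¹ := by
      rw [norm_inv, norm_pow, Complex.norm_natCast]
    rw [hns]
    refine mul_le_mul_of_nonneg_left ?_ (by positivity)
    exact ResAux.opNorm_mul3_le _ _ _ (le_of_eq hnormF) hB (le_of_eq hnormF)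
      hsqrt0 h2g0 hsqrt0
  have hss : Real.sqrt N * Real.sqrt N = (N : ℝ) := Real.mul_self_sqrt (le_of_lt hNpos)
  have heq : ((N : ℝ) ^ 2)⁻¹ *
      (Real.sqrt N * (2 * (g * (Real.sqrt N * ((N : ℝ) * Mx) * Real.sqrt N))) * Real.sqrt N)
      = 2 * g * (N : ℝ) * Mx := by
    have hNne : (N : ℝ) ≠ 0 := ne_of_gt hNpos
    rw [← hss]
    have hs : Real.sqrt N ≠ 0 := by
      intro h
      rw [h, mul_zero] at hss
      exact hNne hss.symm
    field_simp
    rw [Real.sqrt_sq (Real.sqrt_nonneg _)]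
  rw [heq] at hfin
  have h3 : 2 * g * (N : ℝ) * Mx ≤ 3 * g * (N : ℝ) * Mx := by
    have := mul_nonneg (mul_nonneg hg0 (le_of_lt hNpos)) hMx0
    nlinarith
  linarith
end
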